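/- arXiv:1209.3964 — 4 statements merged into one kernel-verified Lean document; each statement's English description precedes it below -/
import Mathlib

section
/- Let A > 0 and let (Ω, ℙ) be a probability space. There exists α = α(A) > 0 depending only on A with the following property: for every z ∈ ℂ with z ≠ 0, setting w = conj(z)/|z|, and for every measurable g : Ω → ℂ with |g| ≤ A|z| almost surely and ∫_Ω g dℙ = 0, the function y = Im(g·w) satisfies (|z|² + α² ∫_Ω y² dℙ)^{1/2} ≤ ∫_Ω |z + g| dℙ. Consequently, for every integrable f : Ω → ℂ, (|z|² + α² ∫_Ω y² dℙ)^{1/2} ≤ ∫_Ω |z + f| dℙ + ∫_Ω |f − g| dℙ. -/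
open MeasureTheory Complex

noncomputable section

/-- `F = (F k)_{k ≤ n}` is a martingale on `(Ω, μ)` with respect to the filtration `ff`:
each `F k` (for `k ≤ n`) is integrable, measurable with respect to `ff k`, and
`E[F k | ff (k-1)] = F (k-1)` for `1 ≤ k ≤ n`. -/
structure MartOn {Ω : Type*} [MeasurableSpace Ω] (μ : Measure Ω)
    (ff : ℕ → MeasurableSpace Ω) (n : ℕ) (F : ℕ → Ω → ℂ) : Prop where
  integrable : ∀ k, k ≤ n → Integrable (F k) μ
  adapted : ∀ k, k ≤ n → Measurable[ff k] (F k)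
  mart : ∀ k, 1 ≤ k → k ≤ n → μ[F k | ff (k-1)] =ᵐ[μ] F (k-1)

/-- The `L¹` norm `E|F_n|` of the martingale `F = (F k)_{k ≤ n}`. -/
def l1 {Ω : Type*} [MeasurableSpace Ω] (μ : Measure Ω) (n : ℕ) (F : ℕ → Ω → ℂ) : ℝ :=
  ∫ x, ‖F n x‖ ∂μ

/-- The `H¹` (square function) norm `E (∑_{k=1}^n |ΔF_k|²)^{1/2}`. -/
def h1 {Ω : Type*} [MeasurableSpace Ω] (μ : Measure Ω) (n : ℕ) (F : ℕ → Ω → ℂ) : ℝ :=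
  ∫ x, Real.sqrt (∑ k ∈ Finset.Icc 1 n, ‖F k x - F (k-1) x‖ ^ 2) ∂μ

/-- The previsible norm `E (∑_{k=1}^n E_{k-1}|ΔF_k|²)^{1/2}`. -/
def pnorm {Ω : Type*} [MeasurableSpace Ω] (μ : Measure Ω) (ff : ℕ → MeasurableSpace Ω)
    (n : ℕ) (F : ℕ → Ω → ℂ) : ℝ :=
  ∫ x, Real.sqrt (∑ k ∈ Finset.Icc 1 n,
    (μ[fun y => ‖F k y - F (k-1) y‖ ^ 2 | ff (k-1)]) x) ∂μ

/-- The absolutely summing norm `E ∑_{k=1}^n |ΔF_k|`. -/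
def anorm {Ω : Type*} [MeasurableSpace Ω] (μ : Measure Ω) (n : ℕ) (F : ℕ → Ω → ℂ) : ℝ :=
  ∫ x, ∑ k ∈ Finset.Icc 1 n, ‖F k x - F (k-1) x‖ ∂μ

/-- The previsible norm `E (∑_{k=1}^n E_{k-1}|d_k|²)^{1/2}` of a (real-valued)
martingale difference sequence `d = (d k)_{1 ≤ k ≤ n}`, used for martingale transforms. -/
def pnormR {Ω : Type*} [MeasurableSpace Ω] (μ : Measure Ω) (ff : ℕ → MeasurableSpace Ω)
    (n : ℕ) (d : ℕ → Ω → ℝ) : ℝ :=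
  ∫ x, Real.sqrt (∑ k ∈ Finset.Icc 1 n, (μ[fun y => (d k y) ^ 2 | ff (k-1)]) x) ∂μ

/-- `conj v / |v|`, set to `1` at `v = 0`. -/
def unitDir (v : ℂ) : ℂ := if v = 0 then 1 else (starRingEnd ℂ) v / (‖v‖ : ℂ)

lemma key_pointwise (A : ℝ) (hA : 0 < A) (z v : ℂ) (hz : z ≠ 0)
    (hv : ‖v‖ ≤ A * ‖z‖) :
    ‖z‖ + v.re + (v.im)^2 / (2*(1+A)*‖z‖)
      ≤ ‖((‖z‖ : ℂ) + v)‖ := by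
  have hzpos : 0 < ‖z‖ := norm_pos_iff.mpr hz
  set a : ℝ := ‖z‖ + v.re with ha
  set b : ℝ := v.im with hb
  set r : ℝ := ‖((‖z‖ : ℂ) + v)‖ with hr
  have hr0 : 0 ≤ r := norm_nonneg _
  have hr2 : r ^ 2 = a ^ 2 + b ^ 2 := by
    rw [hr, Complex.sq_norm, Complex.normSq_apply]
    simp [ha, hb]
    ring
  have har : a ≤ r := by
    have := Complex.re_le_norm ((‖z‖ : ℂ) + v)
    simpa [ha] using this
  have hrM : r ≤ (1 + A) * ‖z‖ := by
    calc r ≤ ‖(‖z‖ : ℂ)‖ + ‖v‖ := norm_add_le _ _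
    _ ≤ ‖z‖ + A * ‖z‖ := by
        simp [Complex.norm_real, _root_.abs_of_nonneg hzpos.le, hv]
    _ = (1 + A) * ‖z‖ := by ring
  have haM : a ≤ (1 + A) * ‖z‖ := har.trans hrM
  have hd : 0 < 2 * (1 + A) * ‖z‖ := mul_pos (by positivity) hzpos
  have h2 : b ^ 2 / (2 * (1 + A) * ‖z‖) ≤ r - a := by
    rw [div_le_iff₀ hd]
    nlinarith [sq_nonneg b, sq_nonneg (r - a)]
  linarith

/-- For every `A > 0` there is `α = α(A) > 0` such that on any probability space, for
`z ≠ 0`, `w = conj z / |z|`, and measurable `g` with `|g| ≤ A|z|` a.s. and `∫ g = 0`,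
the function `y = Im (g·w)` satisfies `(|z|² + α² ∫ y²)^{1/2} ≤ ∫ |z + g|`; consequently
for every integrable `f`, `(|z|² + α² ∫ y²)^{1/2} ≤ ∫ |z + f| + ∫ |f - g|`. -/
theorem pointwise_lower_estimate (A : ℝ) (hA : 0 < A) :
    ∃ α : ℝ, 0 < α ∧
    ∀ (Ω : Type) [MeasurableSpace Ω] (μ : Measure Ω), IsProbabilityMeasure μ →
    ∀ z : ℂ, z ≠ 0 →
    ∀ g : Ω → ℂ, Measurable g → (∀ᵐ x ∂μ, ‖g x‖ ≤ A * ‖z‖) →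
      (∫ x, g x ∂μ) = 0 →
      (Real.sqrt ((‖z‖) ^ 2
          + α ^ 2 * ∫ x, ((g x * ((starRingEnd ℂ) z / (‖z‖ : ℂ))).im) ^ 2 ∂μ)
        ≤ ∫ x, ‖z + g x‖ ∂μ)
      ∧ ∀ f : Ω → ℂ, Integrable f μ →
          Real.sqrt ((‖z‖) ^ 2
            + α ^ 2 * ∫ x, ((g x * ((starRingEnd ℂ) z / (‖z‖ : ℂ))).im) ^ 2 ∂μ)
          ≤ (∫ x, ‖z + f x‖ ∂μ) + ∫ x, ‖f x - g x‖ ∂μ := by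
  refine ⟨Real.sqrt (1/(1+A)), Real.sqrt_pos.mpr (by positivity), ?_⟩
  intro Ω _ μ hμ z hz g hgm hgb hg0
  have hzpos : 0 < ‖z‖ := norm_pos_iff.mpr hz
  set w : ℂ := (starRingEnd ℂ) z / (‖z‖ : ℂ) with hw
  have hwabs : ‖w‖ = 1 := by
    rw [hw, norm_div]
    simp [Complex.norm_conj, _root_.abs_of_nonneg hzpos.le, div_self hzpos.ne']
  have hzw : z * w = (‖z‖ : ℂ) := by
    rw [hw, mul_div_assoc']
    rw [Complex.mul_conj]
    rw [div_eq_iff (by exact_mod_cast hzpos.ne')]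
    rw [← Complex.sq_norm]
    push_cast
    ring
  -- integrability facts
  have hgint : Integrable g μ := by
    refine Integrable.mono' (integrable_const (A * ‖z‖)) hgm.aestronglyMeasurable ?_
    filter_upwards [hgb] with x hx
    simpa using hx
  have hgw_int : Integrable (fun x => g x * w) μ := hgint.mul_const w
  have hgw0 : (∫ x, g x * w ∂μ) = 0 := by
    rw [integral_mul_const, hg0, zero_mul]
  have hy_meas : Measurable (fun x => ((g x * w).im)^2) :=
    ((Complex.measurable_im.comp (hgm.mul_const w)).pow_const 2)
  have hy_bd : ∀ᵐ x ∂μ, ‖((g x * w).im)^2‖ ≤ (A * ‖z‖)^2 := by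
    filter_upwards [hgb] with x hx
    have h1 : |(g x * w).im| ≤ ‖g x * w‖ := Complex.abs_im_le_norm _
    have h2 : ‖g x * w‖ ≤ A * ‖z‖ := by
      rw [norm_mul, hwabs, mul_one]; exact hx
    have h3 : |(g x * w).im| ≤ A * ‖z‖ := h1.trans h2
    rw [Real.norm_eq_abs, _root_.abs_of_nonneg (sq_nonneg _), ← _root_.sq_abs]
    exact pow_le_pow_left₀ (abs_nonneg _) h3 2
  have hy_int : Integrable (fun x => ((g x * w).im)^2) μ :=
    Integrable.mono' (integrable_const _) hy_meas.aestronglyMeasurable hy_bd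
  set Y : ℝ := ∫ x, ((g x * w).im)^2 ∂μ with hY
  have hY0 : 0 ≤ Y := integral_nonneg fun x => sq_nonneg _
  have habsint : Integrable (fun x => ‖z + g x‖) μ := by
    simpa using ((integrable_const z).add hgint).norm
  -- main pointwise bound
  have hpt : ∀ᵐ x ∂μ,
      ‖z‖ + (g x * w).re + ((g x * w).im)^2 / (2*(1+A)*‖z‖)
        ≤ ‖z + g x‖ := by
    filter_upwards [hgb] with x hx
    have hvb : ‖g x * w‖ ≤ A * ‖z‖ := by
      rw [norm_mul, hwabs, mul_one]; exact hx
    have := key_pointwise A hA z (g x * w) hz hvb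
    have heq : ‖((‖z‖ : ℂ) + g x * w)‖ = ‖z + g x‖ := by
      rw [← hzw, ← add_mul, norm_mul, hwabs, mul_one]
    rwa [heq] at this
  -- integrate
  have hlhs_int : Integrable (fun x =>
      ‖z‖ + (g x * w).re + ((g x * w).im)^2 / (2*(1+A)*‖z‖)) μ := by
    refine (Integrable.add (integrable_const _) ?_).add (hy_int.div_const _)
    simpa using hgw_int.re
  have hintineq : ‖z‖ + Y / (2*(1+A)*‖z‖)
      ≤ ∫ x, ‖z + g x‖ ∂μ := by
    have h := integral_mono_ae hlhs_int habsint hpt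
    have hre : ∫ x, (g x * w).re ∂μ = 0 := by
      have h := integral_re hgw_int
      rw [hgw0] at h
      simp only [RCLike.re_to_complex, map_zero] at h
      exact h
    have hre_int : Integrable (fun x => (g x * w).re) μ := by simpa using hgw_int.re
    have hI1 : Integrable (fun x => ‖z‖ + (g x * w).re) μ :=
      (integrable_const _).add hre_int
    have hsum : (∫ x, (‖z‖ + (g x * w).re
          + ((g x * w).im)^2 / (2*(1+A)*‖z‖)) ∂μ)
        = ‖z‖ + Y / (2*(1+A)*‖z‖) := by
      rw [integral_add hI1 (hy_int.div_const _), integral_add (integrable_const _) hre_int,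
        integral_const, integral_div, hre]
      simp [hμ.measure_univ, hY]
    rw [hsum] at h
    exact h
  -- sqrt step
  have hsq : Real.sqrt ((‖z‖) ^ 2 + (Real.sqrt (1/(1+A)))^2 * Y)
      ≤ ‖z‖ + Y / (2*(1+A)*‖z‖) := by
    rw [Real.sq_sqrt (by positivity : (0:ℝ) ≤ 1/(1+A))]
    have hrhs0 : 0 ≤ ‖z‖ + Y / (2*(1+A)*‖z‖) := by positivity
    rw [show ‖z‖ + Y / (2*(1+A)*‖z‖)
        = Real.sqrt ((‖z‖ + Y / (2*(1+A)*‖z‖))^2) from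
        (Real.sqrt_sq hrhs0).symm]
    apply Real.sqrt_le_sqrt
    rw [add_sq]
    have keq : 2 * ‖z‖ * (Y / (2*(1+A)*‖z‖)) = 1/(1+A) * Y := by
      have h1A : (0:ℝ) < 1 + A := by linarith
      field_simp
    linarith [sq_nonneg (Y / (2*(1+A)*‖z‖))]
  have main : Real.sqrt ((‖z‖) ^ 2 + (Real.sqrt (1/(1+A)))^2 * Y)
      ≤ ∫ x, ‖z + g x‖ ∂μ := hsq.trans hintineq
  refine ⟨main, ?_⟩
  intro f hf
  refine main.trans ?_
  have h1 : Integrable (fun x => ‖z + f x‖) μ := by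
    simpa using ((integrable_const z).add hf).norm
  have h2 : Integrable (fun x => ‖f x - g x‖) μ := by
    simpa using (hf.sub hgint).norm
  rw [← integral_add h1 h2]
  refine integral_mono habsint (h1.add h2) fun x => ?_
  have : ‖z + g x‖ ≤ ‖z + f x‖ + ‖f x - g x‖ := by
    have := norm_sub_le ((z + f x)) (f x - g x)
    calc ‖z + g x‖ = ‖(z + f x) - (f x - g x)‖ := by ring_nf
    _ ≤ ‖z + f x‖ + ‖f x - g x‖ := norm_sub_le _ _
  exact this
end
end

section
/- Let A > 0 and let (Ω, ℙ) be a probability space. There exists α = α(A) > 0 depending only on A such that for every measurable g : Ω → ℂ with |g| ≤ A almost surely and ∫_Ω g dℙ = 0, the function u = Im(g) satisfies (1 + α² ∫_Ω u² dℙ)^{1/2} ≤ ∫_Ω |1 + g| dℙ. -/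
open MeasureTheory Complex

noncomputable section

lemma key_pt (A : ℝ) (hA : 0 < A) (z : ℂ) (hz : ‖z‖ ≤ A) :
    1 + z.re + (1/(2*(1+A))) * z.im ^ 2 ≤ ‖1 + z‖ := by
  have hApos : (0:ℝ) < 1 + A := by linarith
  set s := ‖1 + z‖ with hs
  have hs2 : s ^ 2 = (1 + z.re) ^ 2 + z.im ^ 2 := by
    rw [hs, Complex.sq_norm, Complex.normSq_apply]
    simp
    ring
  have hra : |(1 + z).re| ≤ s := Complex.abs_re_le_norm _
  have hre : (1 + z).re = 1 + z.re := by simp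
  rw [hre] at hra
  have h1 : 1 + z.re ≤ s := (le_abs_self _).trans hra
  have hsA : s ≤ 1 + A := by
    calc s ≤ ‖(1:ℂ)‖ + ‖z‖ := norm_add_le 1 z
    _ ≤ 1 + A := by simp [hz]
  have hsum : s + (1 + z.re) ≤ 2 * (1 + A) := by linarith
  have h3 : z.im ^ 2 ≤ (s - (1 + z.re)) * (2 * (1 + A)) := by
    nlinarith [mul_nonneg (sub_nonneg.2 h1) (sub_nonneg.2 hsum)]
  have h4 : z.im ^ 2 / (2 * (1 + A)) ≤ s - (1 + z.re) :=
    (div_le_iff₀ (by linarith)).mpr h3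
  have h5 : 1 / (2 * (1 + A)) * z.im ^ 2 = z.im ^ 2 / (2 * (1 + A)) := by ring
  linarith

/-- For every `A > 0` there is `α = α(A) > 0` such that on any probability space, for
every measurable `g` with `|g| ≤ A` a.s. and `∫ g = 0`, the function `u = Im g`
satisfies `(1 + α² ∫ u²)^{1/2} ≤ ∫ |1 + g|`. -/
theorem pointwise_lower_estimate_at_one (A : ℝ) (hA : 0 < A) :
    ∃ α : ℝ, 0 < α ∧
    ∀ (Ω : Type) [MeasurableSpace Ω] (μ : Measure Ω), IsProbabilityMeasure μ →
    ∀ g : Ω → ℂ, Measurable g → (∀ᵐ x ∂μ, ‖g x‖ ≤ A) →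
      (∫ x, g x ∂μ) = 0 →
      Real.sqrt (1 + α ^ 2 * ∫ x, ((g x).im) ^ 2 ∂μ)
        ≤ ∫ x, ‖1 + g x‖ ∂μ := by
  have hApos : (0:ℝ) < 1 + A := by linarith
  set c : ℝ := 1 / (2 * (1 + A)) with hc
  have hcpos : 0 < c := by positivity
  have hc1 : c ≤ 1 := by
    rw [hc, div_le_one (by linarith)]
    linarith
  refine ⟨c, hcpos, ?_⟩
  intro Ω _ μ hμ g hg hbound hint
  have hgint : Integrable g μ := by
    refine Integrable.mono' (integrable_const A) hg.aestronglyMeasurable ?_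
    filter_upwards [hbound] with x hx
    simpa using hx
  have huint : Integrable (fun x => (g x).im ^ 2) μ := by
    refine Integrable.mono' (integrable_const (A ^ 2))
      ((Complex.measurable_im.comp hg).pow_const 2).aestronglyMeasurable ?_
    filter_upwards [hbound] with x hx
    have h1 := Complex.abs_im_le_norm (g x)
    have h2 := norm_nonneg (g x)
    have h3 := abs_nonneg (g x).im
    rw [Real.norm_eq_abs, _root_.abs_of_nonneg (sq_nonneg _)]
    nlinarith [_root_.sq_abs (g x).im]
  have hgre : Integrable (fun x => (g x).re) μ := by
    simpa [RCLike.re_to_complex] using hgint.re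
  have hre0 : ∫ x, (g x).re ∂μ = 0 := by
    have h := integral_re (μ := μ) (f := g) hgint
    simp only [RCLike.re_to_complex] at h
    rw [h, hint]
    simp
  have i1 : Integrable (fun x => 1 + (g x).re) μ := (integrable_const (1:ℝ)).add hgre
  have i2 : Integrable (fun x => c * (g x).im ^ 2) μ := huint.const_mul c
  have int1 : Integrable (fun x => 1 + (g x).re + c * (g x).im ^ 2) μ := i1.add i2
  have int2 : Integrable (fun x => ‖1 + g x‖) μ := by
    simpa using ((integrable_const (1:ℂ)).add hgint).norm
  have hmono : ∫ x, (1 + (g x).re + c * (g x).im ^ 2) ∂μ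
      ≤ ∫ x, ‖1 + g x‖ ∂μ := by
    refine integral_mono_ae int1 int2 ?_
    filter_upwards [hbound] with x hx
    exact key_pt A hA (g x) hx
  have hval : ∫ x, (1 + (g x).re + c * (g x).im ^ 2) ∂μ
      = 1 + c * ∫ x, (g x).im ^ 2 ∂μ := by
    rw [integral_add i1 i2, integral_add (integrable_const (1:ℝ)) hgre, integral_const,
        integral_const_mul, hre0]
    simp
  set I : ℝ := ∫ x, (g x).im ^ 2 ∂μ with hI
  have hInn : 0 ≤ I := integral_nonneg fun x => sq_nonneg _
  have hsq : Real.sqrt (1 + c ^ 2 * I) ≤ 1 + c * I := by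
    have h : 1 + c ^ 2 * I ≤ (1 + c * I) ^ 2 := by
      nlinarith [sq_nonneg (c * I), mul_nonneg (mul_nonneg hcpos.le hInn) (by linarith : (0:ℝ) ≤ 2 - c)]
    have h2 := Real.sqrt_le_sqrt h
    rwa [Real.sqrt_sq (by positivity)] at h2
  calc Real.sqrt (1 + c ^ 2 * I) ≤ 1 + c * I := hsq
    _ = ∫ x, (1 + (g x).re + c * (g x).im ^ 2) ∂μ := hval.symm
    _ ≤ _ := hmono
end
end

section
/- Fix 0 < α ≤ 1 and C ≥ 1, and a probability space (Ω, ℙ). There exists δ = δ(α, C) > 0 with the following property: let σ : Ω → ℂ satisfy ∫σ dℙ = 0, |σ| ≤ 1 almost surely and ∫|σ|² dℙ > α; let z ∈ ℂ with z ≠ 0 and w = conj(z)/|z|; let g : Ω → ℂ satisfy ∫g dℙ = 0 and |g| ≤ C|z| almost surely. Then for every b ∈ ℂ, the function y = Im((g − bσ)·w) satisfies (|z|² + δ² ∫ y² dℙ)^{1/2} ≤ ∫ |z + g − bσ| dℙ. Consequently, for every integrable f : Ω → ℂ, (|z|² + δ² ∫ y² dℙ)^{1/2} ≤ ∫ |z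 + f − bσ| dℙ + ∫ |f − g| dℙ. -/
open MeasureTheory Complex

noncomputable section

set_option maxHeartbeats 4000000 in
private lemma dummy_placeholder : True := trivial

lemma ptwise (r K : ℝ) (hr : 0 < r) (hK : 0 ≤ K) (u : ℂ) (hu : ‖u‖ ≤ K * r) :
    r + u.re + (u.im)^2 / (2*(1+K)*r) ≤ ‖(r:ℂ) + u‖ := by
  set A := ‖(r:ℂ) + u‖ with hA
  have hA2 : A^2 = (r + u.re)^2 + u.im^2 := by
    rw [hA, Complex.sq_norm, Complex.normSq_apply]
    simp
    ring
  have hre : r + u.re ≤ A := by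
    have := Complex.re_le_norm ((r:ℂ) + u)
    simpa using this
  have hAle : A ≤ (1+K)*r := by
    calc A ≤ ‖(r:ℂ)‖ + ‖u‖ := norm_add_le _ _
    _ ≤ r + K*r := by
        rw [Complex.norm_real, Real.norm_eq_abs, abs_of_pos hr]
        linarith
    _ = (1+K)*r := by ring
  have hpos : 0 < 2*(1+K)*r := by positivity
  have key : u.im^2 ≤ (A - (r + u.re)) * (2*(1+K)*r) := by nlinarith
  have := (div_le_iff₀ hpos).2 key
  linarith

lemma sqrtle (r I δ K : ℝ) (hr : 0 < r) (hI : 0 ≤ I) (hK : 0 ≤ K) (hδ : δ^2 ≤ 1/(1+K)) :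
    Real.sqrt (r^2 + δ^2*I) ≤ r + I/(2*(1+K)*r) := by
  have hX : 0 ≤ I/(2*(1+K)*r) := by positivity
  rw [show r + I/(2*(1+K)*r) = Real.sqrt ((r + I/(2*(1+K)*r))^2) from (Real.sqrt_sq (by linarith)).symm]
  apply Real.sqrt_le_sqrt
  have h1 : δ^2*I ≤ I/(1+K) := by
    calc δ^2*I ≤ (1/(1+K))*I := mul_le_mul_of_nonneg_right hδ hI
    _ = I/(1+K) := by ring
  have h2 : 2 * r * (I/(2*(1+K)*r)) = I/(1+K) := by
    field_simp
  nlinarith [sq_nonneg (I/(2*(1+K)*r))]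

set_option maxHeartbeats 4000000 in
/-- For `0 < α ≤ 1`, `C ≥ 1` and a probability space `(Ω, ℙ)`, there is
`δ = δ(α, C) > 0` such that: if `σ : Ω → ℂ` has `∫ σ = 0`, `|σ| ≤ 1` a.s. and
`∫ |σ|² > α`, `z ≠ 0`, `w = conj z / |z|`, and `g` has `∫ g = 0`, `|g| ≤ C|z|` a.s.,
then for every `b ∈ ℂ`, `y = Im ((g - bσ) w)` satisfies
`(|z|² + δ² ∫ y²)^{1/2} ≤ ∫ |z + g - bσ|`; consequently, for every integrable `f`,
`(|z|² + δ² ∫ y²)^{1/2} ≤ ∫ |z + f - bσ| + ∫ |f - g|`. -/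
theorem perturbed_pointwise_estimate (α C : ℝ) (hα : 0 < α) (hα1 : α ≤ 1) (hC : 1 ≤ C)
    (Ω : Type) [MeasurableSpace Ω] (μ : Measure Ω) [IsProbabilityMeasure μ] :
    ∃ δ : ℝ, 0 < δ ∧
    ∀ σ : Ω → ℂ, Measurable σ → (∫ x, σ x ∂μ) = 0 →
      (∀ᵐ x ∂μ, ‖σ x‖ ≤ 1) → α < (∫ x, (‖σ x‖) ^ 2 ∂μ) →
    ∀ z : ℂ, z ≠ 0 →
    ∀ g : Ω → ℂ, Measurable g → (∫ x, g x ∂μ) = 0 →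
      (∀ᵐ x ∂μ, ‖g x‖ ≤ C * ‖z‖) →
    ∀ b : ℂ,
      (Real.sqrt ((‖z‖) ^ 2 + δ ^ 2 *
          ∫ x, (((g x - b * σ x) * ((starRingEnd ℂ) z / (‖z‖ : ℂ))).im) ^ 2 ∂μ)
        ≤ ∫ x, ‖z + g x - b * σ x‖ ∂μ)
      ∧ ∀ f : Ω → ℂ, Integrable f μ →
          Real.sqrt ((‖z‖) ^ 2 + δ ^ 2 *
            ∫ x, (((g x - b * σ x) * ((starRingEnd ℂ) z / (‖z‖ : ℂ))).im) ^ 2 ∂μ)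
          ≤ (∫ x, ‖z + f x - b * σ x‖ ∂μ)
            + ∫ x, ‖f x - g x‖ ∂μ := by
  set B : ℝ := (4 + 4*C)/α with hB
  have hB0 : 0 < B := by positivity
  set K : ℝ := C + B with hK
  have hK0 : 0 < K := by positivity
  set δ : ℝ := min (α/(2*Real.sqrt 2)) (Real.sqrt (1/(1+K))) with hδdef
  have hs2 : (0:ℝ) < Real.sqrt 2 := by positivity
  have hδ0 : 0 < δ := by
    apply lt_min
    · positivity
    · apply Real.sqrt_pos.2; positivity
  have hδsq : δ^2 ≤ 1/(1+K) := by
    have h1 : δ ≤ Real.sqrt (1/(1+K)) := min_le_right _ _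
    calc δ^2 ≤ (Real.sqrt (1/(1+K)))^2 := by nlinarith
    _ = 1/(1+K) := Real.sq_sqrt (by positivity)
  have hδα : Real.sqrt 2 * δ ≤ α/2 := by
    have h1 : δ ≤ α/(2*Real.sqrt 2) := min_le_left _ _
    calc Real.sqrt 2 * δ ≤ Real.sqrt 2 * (α/(2*Real.sqrt 2)) := by nlinarith
    _ = α/2 := by field_simp
  refine ⟨δ, hδ0, ?_⟩
  intro σ hσm hσ0 hσbd hσα z hz g hgm hg0 hgbd b
  set r : ℝ := ‖z‖ with hrdef
  have hr : 0 < r := by simpa [hrdef] using norm_pos_iff.mpr hz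
  set w : ℂ := (starRingEnd ℂ) z / (r : ℂ) with hw
  have hwabs : ‖w‖ = 1 := by
    rw [hw, norm_div, Complex.norm_conj, Complex.norm_real, Real.norm_eq_abs, abs_of_pos hr, ← hrdef,
      div_self (ne_of_gt hr)]
  have hzw : z * w = (r : ℂ) := by
    rw [hw, mul_div_assoc', Complex.mul_conj]
    rw [div_eq_iff (by exact_mod_cast hr.ne')]
    norm_cast
    rw [Complex.normSq_eq_norm_sq]
    ring
  set u : Ω → ℂ := fun x => (g x - b * σ x) * w with hu
  set M : ℝ := C * r + ‖b‖ with hM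
  have hM0 : 0 < M := by positivity
  -- pointwise rewriting
  have hpt : ∀ x, ‖z + g x - b * σ x‖ = ‖(r:ℂ) + u x‖ := by
    intro x
    have : (r:ℂ) + u x = (z + g x - b * σ x) * w := by
      rw [hu]; simp only []
      rw [← hzw]; ring
    rw [this, norm_mul, hwabs, mul_one]
  -- integrabilities
  have hσint : Integrable σ μ := by
    apply Integrable.mono' (integrable_const (1:ℝ)) hσm.aestronglyMeasurable
    filter_upwards [hσbd] with x hx
    simpa using hx
  have hgint : Integrable g μ := by
    apply Integrable.mono' (integrable_const (C*r)) hgm.aestronglyMeasurable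
    filter_upwards [hgbd] with x hx
    simpa [hrdef] using hx
  have hubd : ∀ᵐ x ∂μ, ‖u x‖ ≤ M := by
    filter_upwards [hσbd, hgbd] with x h1 h2
    rw [hu]
    simp only []
    rw [norm_mul, hwabs, mul_one]
    calc ‖g x - b * σ x‖ ≤ ‖g x‖ + ‖b * σ x‖ :=
          norm_sub_le _ _
    _ ≤ C * r + ‖b‖ * 1 := by
        rw [norm_mul]
        exact add_le_add (by simpa [hrdef] using h2)
          (mul_le_mul_of_nonneg_left h1 (norm_nonneg b))
    _ = M := by rw [hM]; ring
  have hum : Measurable u := ((hgm.sub (measurable_const.mul hσm)).mul measurable_const)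
  have huint : Integrable u μ := by
    apply Integrable.mono' (integrable_const M) hum.aestronglyMeasurable
    filter_upwards [hubd] with x hx
    simpa using hx
  have huzero : (∫ x, u x ∂μ) = 0 := by
    rw [hu]
    simp only []
    rw [integral_mul_const, integral_sub hgint (hσint.const_mul b), hg0, integral_const_mul, hσ0]
    simp
  have hrezero : (∫ x, (u x).re ∂μ) = 0 := by
    have := integral_re huint
    simp only [RCLike.re_to_complex] at this
    rw [this, huzero]
    simp
  have hyim : Measurable fun x => (u x).im := Complex.measurable_im.comp hum
  have hy2int : Integrable (fun x => (u x).im^2) μ := by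
    apply Integrable.mono' (integrable_const (M^2)) (hyim.pow_const 2).aestronglyMeasurable
    filter_upwards [hubd] with x hx
    have h1 : |(u x).im| ≤ ‖u x‖ := Complex.abs_im_le_norm _
    rw [Real.norm_eq_abs, _root_.abs_of_nonneg (sq_nonneg _)]
    have h2 : |(u x).im| ≤ M := le_trans h1 hx
    calc (u x).im^2 = |(u x).im|^2 := (_root_.sq_abs _).symm
    _ ≤ M^2 := pow_le_pow_left₀ (abs_nonneg _) h2 2
  set I : ℝ := ∫ x, (u x).im^2 ∂μ with hI
  have hI0 : 0 ≤ I := integral_nonneg (fun x => sq_nonneg _)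
  have habsint : Integrable (fun x => ‖(r:ℂ) + u x‖) μ := by
    apply Integrable.mono' (integrable_const (r + M))
      (((continuous_norm.measurable).comp (measurable_const.add hum)).aestronglyMeasurable)
    filter_upwards [hubd] with x hx
    simp only [Function.comp_apply]
    rw [Real.norm_eq_abs, _root_.abs_of_nonneg (norm_nonneg _)]
    calc ‖(r:ℂ) + u x‖ ≤ ‖(r:ℂ)‖ + ‖u x‖ := norm_add_le _ _
    _ ≤ r + M := by rw [Complex.norm_real, Real.norm_eq_abs, abs_of_pos hr]; linarith
  -- the goal in terms of u
  have hgoal_eq : (∫ x, ‖z + g x - b * σ x‖ ∂μ) = ∫ x, ‖(r:ℂ) + u x‖ ∂μ := by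
    exact integral_congr_ae (Filter.Eventually.of_forall hpt)

  have hIeq : (∫ x, (((g x - b * σ x) * w).im)^2 ∂μ) = I := rfl
  have hre_int : Integrable (fun x => (u x).re) μ := by
    have h := huint.re
    simpa only [RCLike.re_to_complex] using h
  have main1 : Real.sqrt (r^2 + δ^2 * I) ≤ ∫ x, ‖(r:ℂ) + u x‖ ∂μ := by
    by_cases hb : ‖b‖ ≤ B * r
    · -- small b case
      have hMK : M ≤ K * r := by rw [hM, hK]; nlinarith
      have hub2 : ∀ᵐ x ∂μ, r + (u x).re + (u x).im^2/(2*(1+K)*r) ≤ ‖(r:ℂ) + u x‖ := by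
        filter_upwards [hubd] with x hx
        exact ptwise r K hr hK0.le (u x) (le_trans hx hMK)
      have hlhs_int : Integrable (fun x => r + (u x).re + (u x).im^2/(2*(1+K)*r)) μ :=
        ((integrable_const r).add hre_int).add (hy2int.div_const _)
      have e1 : Integrable (fun x => r + (u x).re) μ := (integrable_const r).add hre_int
      have hint : (∫ x, (r + (u x).re + (u x).im^2/(2*(1+K)*r)) ∂μ)
          = r + I/(2*(1+K)*r) := by
        rw [integral_add e1 (hy2int.div_const _),
            integral_add (integrable_const r) hre_int, integral_const, hrezero,
            integral_div]
        simp [hI]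
      have hmono := integral_mono_ae hlhs_int habsint hub2
      rw [hint] at hmono
      exact le_trans (sqrtle r I δ K hr hI0 hK0.le hδsq) hmono
    · -- large b case
      push_neg at hb
      have hb' : B * r ≤ ‖b‖ := hb.le
      set β : ℝ := ‖b‖ with hβ
      have hβ0 : 0 ≤ β := norm_nonneg b
      have hσabs_m : Measurable fun x => ‖σ x‖ :=
        continuous_norm.measurable.comp hσm
      have hσabs_int : Integrable (fun x => ‖σ x‖) μ := by
        apply Integrable.mono' (integrable_const (1:ℝ)) hσabs_m.aestronglyMeasurable
        filter_upwards [hσbd] with x hx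
        rwa [Real.norm_eq_abs, _root_.abs_of_nonneg (norm_nonneg _)]
      have hσ2_int : Integrable (fun x => ‖σ x‖^2) μ := by
        apply Integrable.mono' (integrable_const (1:ℝ))
          ((hσabs_m.pow_const 2).aestronglyMeasurable)
        filter_upwards [hσbd] with x hx
        rw [Real.norm_eq_abs, _root_.abs_of_nonneg (sq_nonneg _)]
        nlinarith [norm_nonneg (σ x)]
      have hσ1 : α ≤ ∫ x, ‖σ x‖ ∂μ := by
        have h2 : (∫ x, ‖σ x‖^2 ∂μ) ≤ ∫ x, ‖σ x‖ ∂μ := by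
          apply integral_mono_ae hσ2_int hσabs_int
          filter_upwards [hσbd] with x hx
          nlinarith [norm_nonneg (σ x)]
        linarith
      have hzg_m : Measurable fun x => ‖z + g x‖ :=
        continuous_norm.measurable.comp (measurable_const.add hgm)
      have hzg_int : Integrable (fun x => ‖z + g x‖) μ := by
        apply Integrable.mono' (integrable_const ((1+C)*r)) hzg_m.aestronglyMeasurable
        filter_upwards [hgbd] with x hx
        rw [Real.norm_eq_abs, _root_.abs_of_nonneg (norm_nonneg _)]
        calc ‖z + g x‖ ≤ ‖z‖ + ‖g x‖ := norm_add_le _ _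
        _ ≤ r + C*r := by rw [← hrdef]; linarith
        _ = (1+C)*r := by ring
      have hzg : (∫ x, ‖z + g x‖ ∂μ) ≤ (1+C)*r := by
        have h3 := integral_mono_ae hzg_int (integrable_const ((1+C)*r)) ?_
        · rwa [integral_const, probReal_univ, one_smul] at h3
        · filter_upwards [hgbd] with x hx
          calc ‖z + g x‖ ≤ ‖z‖ + ‖g x‖ := norm_add_le _ _
          _ ≤ r + C*r := by rw [← hrdef]; linarith
          _ = (1+C)*r := by ring
      have hlow : β * (∫ x, ‖σ x‖ ∂μ) - (∫ x, ‖z + g x‖ ∂μ)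
          ≤ ∫ x, ‖(r:ℂ) + u x‖ ∂μ := by
        have hpt2 : ∀ x, β * ‖σ x‖ - ‖z + g x‖
            ≤ ‖(r:ℂ) + u x‖ := by
          intro x
          rw [← hpt x]
          have e : b * σ x = (z + g x) - (z + g x - b * σ x) := by ring
          have h4 : β * ‖σ x‖
              ≤ ‖z + g x‖ + ‖z + g x - b * σ x‖ := by
            calc β * ‖σ x‖ = ‖b * σ x‖ := (norm_mul _ _).symm
            _ = ‖(z + g x) - (z + g x - b * σ x)‖ := by rw [← e]
            _ ≤ _ := norm_sub_le _ _
          linarith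
        have hint2 : Integrable (fun x => β * ‖σ x‖ - ‖z + g x‖) μ :=
          (hσabs_int.const_mul β).sub hzg_int
        have h5 := integral_mono_ae hint2 habsint (Filter.Eventually.of_forall hpt2)
        rwa [integral_sub (hσabs_int.const_mul β) hzg_int, integral_const_mul] at h5
      have hIub : I ≤ 2*C^2*r^2 + 2*β^2 := by
        have h6 := integral_mono_ae hy2int (integrable_const (2*C^2*r^2 + 2*β^2)) ?_
        · rwa [integral_const, probReal_univ, one_smul] at h6
        · filter_upwards [hubd] with x hx
          have h7 : |(u x).im| ≤ ‖u x‖ := Complex.abs_im_le_norm _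
          have h8 : (u x).im^2 ≤ M^2 := by
            calc (u x).im^2 = |(u x).im|^2 := (_root_.sq_abs _).symm
            _ ≤ M^2 := by nlinarith [abs_nonneg ((u x).im), norm_nonneg (u x)]
          rw [hM] at h8
          nlinarith [h8, sq_nonneg (C*r - β)]
      have hs22 : Real.sqrt 2 ^ 2 = 2 := Real.sq_sqrt (by norm_num)
      have hsq : Real.sqrt (r^2 + δ^2*I)
          ≤ r + Real.sqrt 2 * δ * (C*r) + Real.sqrt 2 * δ * β := by
        have h9 : r^2 + δ^2*I ≤ (r + Real.sqrt 2 * δ * (C*r) + Real.sqrt 2 * δ * β)^2 := by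
          have h10 : δ^2*I ≤ δ^2*(2*C^2*r^2 + 2*β^2) :=
            mul_le_mul_of_nonneg_left hIub (sq_nonneg δ)
          have e2 : (Real.sqrt 2 * δ * β)^2 = 2*(δ^2*β^2) := by
            rw [mul_pow, mul_pow, hs22]; ring
          have e3 : (Real.sqrt 2 * δ * (C*r))^2 = 2*(δ^2*(C*r)^2) := by
            rw [mul_pow, mul_pow, hs22]; ring
          have h10' : (Real.sqrt 2 * δ * (C*r))^2 + (Real.sqrt 2 * δ * β)^2
              = δ^2*(2*C^2*r^2 + 2*β^2) := by
            rw [e2, e3]; ring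
          have ha0 : 0 ≤ Real.sqrt 2 * δ * (C*r) := by positivity
          have hc0 : 0 ≤ Real.sqrt 2 * δ * β := by positivity
          nlinarith [mul_nonneg ha0 hc0, mul_nonneg hr.le ha0, mul_nonneg hr.le hc0]
        calc Real.sqrt (r^2 + δ^2*I)
            ≤ Real.sqrt ((r + Real.sqrt 2 * δ * (C*r) + Real.sqrt 2 * δ * β)^2) :=
              Real.sqrt_le_sqrt h9
        _ = r + Real.sqrt 2 * δ * (C*r) + Real.sqrt 2 * δ * β := Real.sqrt_sq (by positivity)
      have harith : r + Real.sqrt 2 * δ * (C*r) + Real.sqrt 2 * δ * β ≤ β*α - (1+C)*r := by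
        have hβB : (4+4*C)*r ≤ α*β := by
          have h11 : α * (B*r) = (4+4*C)*r := by rw [hB]; field_simp
          calc (4+4*C)*r = α*(B*r) := h11.symm
          _ ≤ α*β := by nlinarith
        have h12 : Real.sqrt 2 * δ * β ≤ (α/2)*β := mul_le_mul_of_nonneg_right hδα hβ0
        have h13 : Real.sqrt 2 * δ * (C*r) ≤ (α/2)*(C*r) :=
          mul_le_mul_of_nonneg_right hδα (by positivity)
        have h15 : (α/2)*(C*r) ≤ C*r := by
          nlinarith [mul_nonneg (by linarith : (0:ℝ) ≤ C) hr.le]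
        linarith
      have hfinal : β*α - (1+C)*r ≤ β * (∫ x, ‖σ x‖ ∂μ)
          - (∫ x, ‖z + g x‖ ∂μ) := by
        have h14 : β*α ≤ β * ∫ x, ‖σ x‖ ∂μ := mul_le_mul_of_nonneg_left hσ1 hβ0
        linarith
      exact le_trans hsq (le_trans harith (le_trans hfinal hlow))
  constructor
  · rw [hgoal_eq]
    exact main1
  · intro f hf
    have hfg_int : Integrable (fun x => ‖f x - g x‖) μ := by
      exact (hf.sub hgint).norm
    have hzf_int : Integrable (fun x => ‖z + f x - b * σ x‖) μ := by
      exact (((integrable_const z).add hf).sub (hσint.const_mul b)).norm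
    have hzg_abs_int : Integrable (fun x => ‖z + g x - b * σ x‖) μ := by
      have h := habsint
      apply h.congr
      filter_upwards with x
      exact (hpt x).symm
    have hpt3 : ∀ x, ‖z + g x - b * σ x‖
        ≤ ‖z + f x - b * σ x‖ + ‖f x - g x‖ := by
      intro x
      have e : z + g x - b * σ x = (z + f x - b * σ x) - (f x - g x) := by ring
      rw [e]
      exact norm_sub_le _ _
    have hsum_int : Integrable
        (fun x => ‖z + f x - b * σ x‖ + ‖f x - g x‖) μ :=
      hzf_int.add hfg_int
    have h15 := integral_mono_ae hzg_abs_int hsum_int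
      (Filter.Eventually.of_forall hpt3)
    rw [integral_add hzf_int hfg_int] at h15
    calc Real.sqrt (r^2 + δ^2 * I) ≤ ∫ x, ‖(r:ℂ) + u x‖ ∂μ := main1
    _ = ∫ x, ‖z + g x - b * σ x‖ ∂μ := hgoal_eq.symm
    _ ≤ _ := h15
end
end

section
/- L² identity for the even part: let h ∈ H²₀(𝕋) and let u(z) = (h(z) + h(z̄))/2 be its even part, and set ⟨u,σ⟩ = ∫_𝕋 u·σ dm. Then for all w, b ∈ ℂ with |w| = 1: Im²(w·(⟨u,σ⟩ − b)) + Re²(w·⟨u,σ⟩) + ∫_𝕋 |u − ⟨u,σ⟩·σ|² dm = ∫_𝕋 Im²(w·(h − b·σ)) dm. -/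
open MeasureTheory Complex

noncomputable section

instance fact2pi : Fact (0 < 2 * Real.pi) := ⟨Real.two_pi_pos⟩

/-- The circle `𝕋`, modeled as `ℝ / 2πℤ`. -/
abbrev Torus := AddCircle (2 * Real.pi)

/-- The normalized Haar (probability) measure on `𝕋`. -/
def haarT : Measure Torus := AddCircle.haarAddCircle

/-- The cosine `cos θ` of a point `e^{iθ}` of `𝕋`. -/
def cosT (y : Torus) : ℝ := (AddCircle.toCircle y : ℂ).re

/-- The Rademacher function `σ(e^{iθ}) = sign (cos θ)` on `𝕋`. -/
def radT (y : Torus) : ℝ := Real.sign (cosT y)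

open scoped ComplexConjugate

namespace Aux
open AddCircle

abbrev μT : Measure Torus := AddCircle.haarAddCircle

lemma cosT_coe (θ : ℝ) : cosT (θ : Torus) = Real.cos θ := by
  rw [cosT, AddCircle.toCircle_apply_mk, div_self Real.two_pi_pos.ne', one_mul,
    Circle.coe_exp, Complex.exp_ofReal_mul_I_re]

lemma cosT_neg (y : Torus) : cosT (-y) = cosT y := by
  induction y using QuotientAddGroup.induction_on with
  | H θ =>
    rw [show -((θ : ℝ) : Torus) = ((-θ : ℝ) : Torus) from rfl]
    rw [cosT_coe, cosT_coe, Real.cos_neg]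

lemma radT_neg (y : Torus) : radT (-y) = radT y := by rw [radT, cosT_neg]; rfl

lemma continuous_cosT : Continuous cosT :=
  Complex.continuous_re.comp (continuous_subtype_val.comp AddCircle.continuous_toCircle)

lemma measurable_sign : Measurable Real.sign := by
  have : Real.sign = fun r : ℝ => if r < 0 then (-1:ℝ) else if 0 < r then 1 else 0 := rfl
  rw [this]
  exact Measurable.ite measurableSet_Iio measurable_const
    (Measurable.ite measurableSet_Ioi measurable_const measurable_const)

lemma measurable_radT : Measurable radT :=
  measurable_sign.comp continuous_cosT.measurable

lemma abs_radT_le (y : Torus) : |radT y| ≤ 1 := by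
  rcases lt_trichotomy (cosT y) 0 with hc|hc|hc
  · rw [radT, Real.sign_of_neg hc]; norm_num
  · rw [radT, hc, Real.sign_zero]; norm_num
  · rw [radT, Real.sign_of_pos hc]; norm_num

lemma cosT_ne_zero_ae : ∀ᵐ y ∂μT, cosT y ≠ 0 := by
  have hmeas : MeasurableSet {y : Torus | cosT y = 0} :=
    continuous_cosT.measurable (measurableSet_singleton 0)
  have hreal : (volume : Measure ℝ) {θ : ℝ | Real.cos θ = 0} = 0 := by
    have hsub : {θ : ℝ | Real.cos θ = 0} ⊆
        Set.range (fun k : ℤ => (2 * (k:ℝ) + 1) * Real.pi / 2) := by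
      intro θ hθ
      obtain ⟨k, hk⟩ := Real.cos_eq_zero_iff.mp hθ
      exact ⟨k, hk.symm⟩
    exact measure_mono_null hsub ((Set.countable_range _).measure_zero _)
  have hvol : (volume : Measure Torus) {y | cosT y = 0} = 0 := by
    rw [AddCircle.add_projection_respects_measure (2*Real.pi) 0 hmeas]
    refine measure_mono_null Set.inter_subset_left ?_
    have hpre : (QuotientAddGroup.mk ⁻¹' {y : Torus | cosT y = 0} : Set ℝ)
        = {θ | Real.cos θ = 0} := by
      ext θ
      simp only [Set.mem_preimage, Set.mem_setOf_eq]
      rw [show (QuotientAddGroup.mk θ : Torus) = (θ : Torus) from rfl, cosT_coe]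
    rw [hpre]; exact hreal
  have hhaar : μT {y | cosT y = 0} = 0 := by
    have h2 : (volume : Measure Torus) = ENNReal.ofReal (2*Real.pi) • μT :=
      AddCircle.volume_eq_smul_haarAddCircle
    rw [h2, Measure.smul_apply, smul_eq_mul] at hvol
    rcases mul_eq_zero.mp hvol with hv|hv
    · exact absurd hv (by simp [Real.pi_pos])
    · exact hv
  rw [ae_iff]
  simpa using hhaar

lemma radT_sq_ae : ∀ᵐ y ∂μT, radT y ^ 2 = 1 := by
  filter_upwards [cosT_ne_zero_ae] with y hy
  rcases hy.lt_or_gt with hc|hc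
  · rw [radT, Real.sign_of_neg hc]; norm_num
  · rw [radT, Real.sign_of_pos hc]; norm_num


lemma fourier_neg_neg (n : ℤ) (y : Torus) : fourier (-n) (-y) = fourier (-(-n)) y := by
  rw [fourier_apply, fourier_apply, smul_neg, neg_smul, neg_neg, neg_neg]

lemma fourierCoeff_comp_neg (f : Torus → ℂ) (n : ℤ) :
    fourierCoeff (fun y => f (-y)) n = fourierCoeff f (-n) := by
  rw [fourierCoeff, fourierCoeff]
  calc ∫ t, fourier (-n) t • f (-t) ∂haarAddCircle
      = ∫ t, (fun y => fourier (-n) (-y) • f y) (-t) ∂haarAddCircle := by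
        simp only [neg_neg]
    _ = ∫ t, fourier (-n) (-t) • f t ∂haarAddCircle :=
        integral_neg_eq_self (fun y => fourier (-n) (-y) • f y) haarAddCircle
    _ = ∫ t, fourier (-(-n)) t • f t ∂haarAddCircle := by
        simp_rw [fourier_neg_neg]

lemma fourierCoeff_conj (f : Torus → ℂ) (n : ℤ) :
    fourierCoeff (fun y => conj (f y)) n = conj (fourierCoeff f (-n)) := by
  rw [fourierCoeff, fourierCoeff, ← integral_conj]
  congr 1; funext t
  rw [smul_eq_mul, smul_eq_mul, neg_neg, map_mul, ← fourier_neg]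

lemma memL2_conj {f : Torus → ℂ} (hf : MemLp f 2 μT) :
    MemLp (fun y => conj (f y)) 2 μT := by
  constructor
  · exact Complex.continuous_conj.comp_aestronglyMeasurable hf.1
  · have : eLpNorm (fun y => conj (f y)) 2 μT = eLpNorm f 2 μT := eLpNorm_conj f 2 μT
    rw [this]; exact hf.2

lemma integral_conj_mul_eq_zero {f g : Torus → ℂ} (hf : MemLp f 2 μT) (hg : MemLp g 2 μT)
    (h0 : ∀ n : ℤ, conj (fourierCoeff f n) * fourierCoeff g n = 0) :
    ∫ y, conj (f y) * g y ∂μT = 0 := by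
  have key : (inner ℂ (hf.toLp f) (hg.toLp g) : ℂ) = ∫ y, conj (f y) * g y ∂μT := by
    rw [MeasureTheory.L2.inner_def]
    refine integral_congr_ae ?_
    filter_upwards [hf.coeFn_toLp, hg.coeFn_toLp] with y h1 h2
    rw [RCLike.inner_apply, h1, h2, mul_comm]
  rw [← key, ← LinearIsometryEquiv.inner_map_map fourierBasis.repr (hf.toLp f) (hg.toLp g),
    lp.inner_eq_tsum]
  have hcf : ∀ n : ℤ, fourierBasis.repr (hf.toLp f) n = fourierCoeff f n := by
    intro n
    rw [fourierBasis_repr]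
    exact integral_congr_ae (by filter_upwards [hf.coeFn_toLp] with y hy; rw [hy])
  have hcg : ∀ n : ℤ, fourierBasis.repr (hg.toLp g) n = fourierCoeff g n := by
    intro n
    rw [fourierBasis_repr]
    exact integral_congr_ae (by filter_upwards [hg.coeFn_toLp] with y hy; rw [hy])
  have hz : ∀ n : ℤ,
      (inner ℂ ((fourierBasis.repr (hf.toLp f)) n) ((fourierBasis.repr (hg.toLp g)) n) : ℂ) = 0 := by
    intro n
    rw [RCLike.inner_apply, hcf n, hcg n, mul_comm]
    exact h0 n
  rw [tsum_congr hz, tsum_zero]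

lemma integrable_conj_mul {f g : Torus → ℂ} (hf : MemLp f 2 μT) (hg : MemLp g 2 μT) :
    Integrable (fun y => conj (f y) * g y) μT := by
  have := MeasureTheory.L2.integrable_inner (𝕜 := ℂ) (hf.toLp f) (hg.toLp g)
  refine this.congr ?_
  filter_upwards [hf.coeFn_toLp, hg.coeFn_toLp] with y h1 h2
  rw [RCLike.inner_apply, h1, h2, mul_comm]

lemma integrable_mul' {f g : Torus → ℂ} (hf : MemLp f 2 μT) (hg : MemLp g 2 μT) :
    Integrable (fun y => f y * g y) μT := by
  have := integrable_conj_mul (memL2_conj hf) hg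
  simpa using this

lemma integrable_cre {f : Torus → ℂ} (hf : Integrable f μT) :
    Integrable (fun y => (f y).re) μT := by
  simpa using hf.re

lemma integrable_cim {f : Torus → ℂ} (hf : Integrable f μT) :
    Integrable (fun y => (f y).im) μT := by
  simpa using hf.im

lemma integral_cre {f : Torus → ℂ} (hf : Integrable f μT) :
    ∫ y, (f y).re ∂μT = (∫ y, f y ∂μT).re := by
  simpa using integral_re hf

lemma integral_cim {f : Torus → ℂ} (hf : Integrable f μT) :
    ∫ y, (f y).im ∂μT = (∫ y, f y ∂μT).im := by
  simpa using integral_im hf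

lemma memL2_cim {f : Torus → ℂ} (hf : MemLp f 2 μT) :
    MemLp (fun y => (f y).im) 2 μT := by
  simpa using hf.im

end Aux

open Aux AddCircle in
/-- **L² identity for the even part.** Let `h ∈ H²₀(𝕋)`, `u(z) = (h(z) + h(z̄))/2` its
even part (on `𝕋 = ℝ/2πℤ` conjugation is `z ↦ -z`), and `⟨u, σ⟩ = ∫ u σ dm`. Then for
all `w, b ∈ ℂ` with `|w| = 1`:
`Im²(w(⟨u,σ⟩ - b)) + Re²(w ⟨u,σ⟩) + ∫ |u - ⟨u,σ⟩ σ|² = ∫ Im²(w (h - b σ))`. -/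
theorem even_part_identity (h : Torus → ℂ) (hL2 : MemLp h 2 haarT)
    (hHardy : ∀ m : ℤ, m ≤ 0 → fourierCoeff h m = 0)
    (w b : ℂ) (hw : ‖w‖ = 1) :
    ((w * ((∫ y, (h y + h (-y)) / 2 * (radT y : ℂ) ∂haarT) - b)).im) ^ 2
      + ((w * (∫ y, (h y + h (-y)) / 2 * (radT y : ℂ) ∂haarT)).re) ^ 2
      + (∫ y, (‖(h y + h (-y)) / 2
          - (∫ y', (h y' + h (-y')) / 2 * (radT y' : ℂ) ∂haarT) * (radT y : ℂ)‖) ^ 2 ∂haarT)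
    = ∫ y, ((w * (h y - b * (radT y : ℂ))).im) ^ 2 ∂haarT := by
  have hmu : haarT = Aux.μT := rfl
  rw [hmu] at hL2 ⊢
  have hσm : Measurable radT := measurable_radT
  have hσmC : AEStronglyMeasurable (fun y => ((radT y : ℝ) : ℂ)) Aux.μT :=
    (Complex.continuous_ofReal.measurable.comp hσm).aestronglyMeasurable
  have hσbd : ∃ C : ℝ, ∀ y, ‖((radT y : ℝ) : ℂ)‖ ≤ C :=
    ⟨1, fun y => by rw [Complex.norm_real, Real.norm_eq_abs]; exact abs_radT_le y⟩
  have hσbdR : ∃ C : ℝ, ∀ y, ‖radT y‖ ≤ C :=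
    ⟨1, fun y => by rw [Real.norm_eq_abs]; exact abs_radT_le y⟩
  have hmL2 : MemLp (fun y => h (-y)) 2 Aux.μT :=
    hL2.comp_measurePreserving (Measure.measurePreserving_neg Aux.μT)
  have huL2 : MemLp (fun y => (h y + h (-y)) / 2) 2 Aux.μT := by
    have heq : (fun y : Torus => (h y + h (-y)) / 2)
        = fun y => (2:ℂ)⁻¹ * (h y + h (-y)) := by
      funext y; rw [div_eq_mul_inv, mul_comm]
    rw [heq]; exact (hL2.add hmL2).const_mul _
  have ih : Integrable h Aux.μT := hL2.integrable one_le_two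
  have ihm : Integrable (fun y => h (-y)) Aux.μT := hmL2.integrable one_le_two
  have iu : Integrable (fun y => (h y + h (-y)) / 2) Aux.μT := huL2.integrable one_le_two
  have ihσ : Integrable (fun y => h y * ((radT y : ℝ) : ℂ)) Aux.μT :=
    (Integrable.bdd_mul ih hσmC (Filter.Eventually.of_forall hσbd.choose_spec)).congr
      (Filter.Eventually.of_forall fun y => mul_comm _ _)
  have ihmσ : Integrable (fun y => h (-y) * ((radT y : ℝ) : ℂ)) Aux.μT :=
    (Integrable.bdd_mul ihm hσmC (Filter.Eventually.of_forall hσbd.choose_spec)).congr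
      (Filter.Eventually.of_forall fun y => mul_comm _ _)
  have iuσ : Integrable (fun y => (h y + h (-y)) / 2 * ((radT y : ℝ) : ℂ)) Aux.μT :=
    (Integrable.bdd_mul iu hσmC (Filter.Eventually.of_forall hσbd.choose_spec)).congr
      (Filter.Eventually.of_forall fun y => mul_comm _ _)
  set c : ℂ := ∫ y, (h y + h (-y)) / 2 * ((radT y : ℝ) : ℂ) ∂Aux.μT with hc
  -- ⟨h, σ⟩ = ⟨u, σ⟩
  have hneg_int : ∫ y, h (-y) * ((radT y : ℝ) : ℂ) ∂Aux.μT
      = ∫ y, h y * ((radT y : ℝ) : ℂ) ∂Aux.μT := by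
    have := integral_neg_eq_self (fun y => h y * ((radT (-y) : ℝ) : ℂ)) Aux.μT
    simpa [radT_neg] using this
  have hcσ : ∫ y, h y * ((radT y : ℝ) : ℂ) ∂Aux.μT = c := by
    have hsplit : c = ∫ y, (h y * ((radT y : ℝ) : ℂ) / 2
        + h (-y) * ((radT y : ℝ) : ℂ) / 2) ∂Aux.μT := by
      rw [hc]; congr 1; funext y; ring
    rw [integral_add (ihσ.div_const 2) (ihmσ.div_const 2), integral_div, integral_div,
      hneg_int] at hsplit
    rw [hsplit]; ring
  -- ∫ h·h = 0
  have hhh : ∫ y, h y * h y ∂Aux.μT = 0 := by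
    have h0 : ∀ n : ℤ, conj (fourierCoeff (fun y => conj (h y)) n) * fourierCoeff h n = 0 := by
      intro n
      rw [fourierCoeff_conj, Complex.conj_conj]
      rcases le_or_gt n 0 with hn|hn
      · rw [hHardy n hn, mul_zero]
      · rw [hHardy (-n) (by linarith), zero_mul]
    have := integral_conj_mul_eq_zero (memL2_conj hL2) hL2 h0
    simpa using this
  -- ∫ conj h · h(-·) = 0
  have hchn : ∫ y, conj (h y) * h (-y) ∂Aux.μT = 0 := by
    refine integral_conj_mul_eq_zero hL2 hmL2 ?_
    intro n
    rw [fourierCoeff_comp_neg]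
    rcases le_or_gt n 0 with hn|hn
    · rw [hHardy n hn, map_zero, zero_mul]
    · rw [hHardy (-n) (by linarith), mul_zero]
  set A : ℝ := ∫ y, Complex.normSq (h y) ∂Aux.μT with hA
  have iA : Integrable (fun y => Complex.normSq (h y)) Aux.μT := by
    refine (integrable_cre (integrable_conj_mul hL2 hL2)).congr
      (Filter.Eventually.of_forall fun y => ?_)
    show (conj (h y) * h y).re = Complex.normSq (h y)
    rw [mul_comm, Complex.mul_conj, Complex.ofReal_re]
  have iAm : Integrable (fun y => Complex.normSq (h (-y))) Aux.μT := by
    refine (integrable_cre (integrable_conj_mul hmL2 hmL2)).congr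
      (Filter.Eventually.of_forall fun y => ?_)
    show (conj (h (-y)) * h (-y)).re = Complex.normSq (h (-y))
    rw [mul_comm, Complex.mul_conj, Complex.ofReal_re]
  have iUsq : Integrable (fun y => Complex.normSq ((h y + h (-y)) / 2)) Aux.μT := by
    refine (integrable_cre (integrable_conj_mul huL2 huL2)).congr
      (Filter.Eventually.of_forall fun y => ?_)
    show (conj ((h y + h (-y)) / 2) * ((h y + h (-y)) / 2)).re
        = Complex.normSq ((h y + h (-y)) / 2)
    rw [mul_comm, Complex.mul_conj, Complex.ofReal_re]
  have iRe : Integrable (fun y => (conj (h y) * h (-y)).re) Aux.μT :=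
    integrable_cre (integrable_conj_mul hL2 hmL2)
  have hAneg : ∫ y, Complex.normSq (h (-y)) ∂Aux.μT = A :=
    integral_neg_eq_self (fun y => Complex.normSq (h y)) Aux.μT
  have hU : ∫ y, Complex.normSq ((h y + h (-y)) / 2) ∂Aux.μT = A / 2 := by
    have hpt : (fun y => Complex.normSq ((h y + h (-y)) / 2))
        = fun y => Complex.normSq (h y) / 4 + Complex.normSq (h (-y)) / 4
            + (conj (h y) * h (-y)).re / 2 := by
      funext y
      rw [map_div₀ Complex.normSq, Complex.normSq_add]
      have h4 : Complex.normSq 2 = 4 := by norm_num [Complex.normSq_apply]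
      have hre : h y * conj (h (-y)) = conj (conj (h y) * h (-y)) := by
        rw [map_mul, Complex.conj_conj]
      rw [h4, hre, Complex.conj_re]; ring
    have i14 : Integrable (fun y => Complex.normSq (h y) / 4 + Complex.normSq (h (-y)) / 4)
        Aux.μT := (iA.div_const 4).add (iAm.div_const 4)
    rw [hpt, integral_add i14 (iRe.div_const 2),
      integral_add (iA.div_const 4) (iAm.div_const 4), integral_div, integral_div,
      integral_div, hAneg, ← hA, integral_cre (integrable_conj_mul hL2 hmL2), hchn]
    norm_num
    ring
  have hw' : Complex.normSq w = 1 := by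
    rw [Complex.normSq_eq_norm_sq, hw, one_pow]
  have ihh : Integrable (fun y => w * w * (h y * h y)) Aux.μT :=
    (integrable_mul' hL2 hL2).const_mul (w * w)
  have ihh2 : Integrable (fun y => (w * w * (h y * h y)).re) Aux.μT := integrable_cre ihh
  have hIm2 : ∫ y, ((w * h y).im) ^ 2 ∂Aux.μT = A / 2 := by
    have hsq : ∀ z : ℂ, (z.im) ^ 2 = Complex.normSq z / 2 - (z * z).re / 2 := by
      intro z; rw [Complex.normSq_apply, Complex.mul_re]; ring
    have hpt : (fun y => ((w * h y).im) ^ 2)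
        = fun y => Complex.normSq (h y) / 2 - (w * w * (h y * h y)).re / 2 := by
      funext y
      rw [hsq, Complex.normSq_mul, hw', one_mul,
        show (w * h y) * (w * h y) = w * w * (h y * h y) from by ring]
    rw [hpt, integral_sub (iA.div_const 2)
        (ihh2.div_const 2),
      integral_div, integral_div, ← hA,
      integral_cre ihh,
      integral_const_mul, hhh, mul_zero, Complex.zero_re]
    ring
  have hσIm : ∫ y, radT y * (w * h y).im ∂Aux.μT = (w * c).im := by
    have hpt : (fun y => radT y * (w * h y).im)
        = fun y => (w * (h y * ((radT y : ℝ) : ℂ))).im := by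
      funext y
      rw [← mul_assoc]
      simp only [Complex.mul_im, Complex.mul_re, Complex.ofReal_re, Complex.ofReal_im]
      ring
    have iwσ : Integrable (fun y => w * (h y * ((radT y : ℝ) : ℂ))) Aux.μT := ihσ.const_mul w
    rw [hpt, integral_cim iwσ, integral_const_mul, hcσ]
  have irad2 : Integrable (fun y => radT y ^ 2) Aux.μT :=
    (integrable_const (1:ℝ)).congr (radT_sq_ae.mono fun y hy => hy.symm)
  have hrad2 : ∫ y, radT y ^ 2 ∂Aux.μT = 1 := by
    rw [integral_congr_ae (g := fun _ => (1:ℝ)) radT_sq_ae]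
    simp
  have i2 : Integrable (fun y => radT y * (conj c * ((h y + h (-y)) / 2)).re) Aux.μT :=
    Integrable.bdd_mul (integrable_cre (iu.const_mul (conj c))) hσm.aestronglyMeasurable (Filter.Eventually.of_forall hσbdR.choose_spec)
  have hS8 : ∫ y, radT y * (conj c * ((h y + h (-y)) / 2)).re ∂Aux.μT
      = Complex.normSq c := by
    have hpt8 : (fun y => radT y * (conj c * ((h y + h (-y)) / 2)).re)
        = fun y => (conj c * ((h y + h (-y)) / 2 * ((radT y : ℝ) : ℂ))).re := by
      funext y
      rw [← mul_assoc]
      simp only [Complex.mul_im, Complex.mul_re, Complex.ofReal_re, Complex.ofReal_im]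
      ring
    have icu : Integrable (fun y => conj c * ((h y + h (-y)) / 2 * ((radT y : ℝ) : ℂ)))
        Aux.μT := iuσ.const_mul (conj c)
    rw [hpt8, integral_cre icu, integral_const_mul, ← hc,
      show conj c * c = ((Complex.normSq c : ℝ) : ℂ) from by rw [mul_comm, Complex.mul_conj],
      Complex.ofReal_re]
  have hF1 : ∫ y, (‖(h y + h (-y)) / 2 - c * ((radT y : ℝ) : ℂ)‖) ^ 2 ∂Aux.μT
      = A / 2 - Complex.normSq c := by
    have hpt : (fun y => (‖(h y + h (-y)) / 2 - c * ((radT y : ℝ) : ℂ)‖) ^ 2)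
        = fun y => Complex.normSq ((h y + h (-y)) / 2)
            - 2 * (radT y * (conj c * ((h y + h (-y)) / 2)).re)
            + Complex.normSq c * radT y ^ 2 := by
      funext y
      rw [Complex.sq_norm]
      simp only [Complex.normSq_apply, Complex.sub_re, Complex.sub_im, Complex.mul_re,
        Complex.mul_im, Complex.conj_re, Complex.conj_im, Complex.ofReal_re, Complex.ofReal_im]
      ring
    have ia1 : Integrable (fun y => 2 * (radT y * (conj c * ((h y + h (-y)) / 2)).re))
        Aux.μT := i2.const_mul 2
    have ia2 : Integrable (fun y => Complex.normSq ((h y + h (-y)) / 2)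
        - 2 * (radT y * (conj c * ((h y + h (-y)) / 2)).re)) Aux.μT := iUsq.sub ia1
    have ia3 : Integrable (fun y => Complex.normSq c * radT y ^ 2) Aux.μT :=
      irad2.const_mul _
    rw [hpt, integral_add ia2 ia3,
      integral_sub iUsq ia1, integral_const_mul, integral_const_mul,
      hU, hrad2, hS8, mul_one]
    ring
  have iwhim : Integrable (fun y => (w * h y).im) Aux.μT := integrable_cim (ih.const_mul w)
  have iIm2 : Integrable (fun y => ((w * h y).im) ^ 2) Aux.μT :=
    (memL2_cim (hL2.const_mul w)).integrable_sq
  have iσIm : Integrable (fun y => radT y * (w * h y).im) Aux.μT :=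
    Integrable.bdd_mul iwhim hσm.aestronglyMeasurable (Filter.Eventually.of_forall hσbdR.choose_spec)
  have hF2 : ∫ y, ((w * (h y - b * ((radT y : ℝ) : ℂ))).im) ^ 2 ∂Aux.μT
      = A / 2 - 2 * (w * b).im * (w * c).im + ((w * b).im) ^ 2 := by
    have hpt : (fun y => ((w * (h y - b * ((radT y : ℝ) : ℂ))).im) ^ 2)
        = fun y => ((w * h y).im) ^ 2 - 2 * (w * b).im * (radT y * (w * h y).im)
            + ((w * b).im) ^ 2 * radT y ^ 2 := by
      funext y
      have him : (w * (h y - b * ((radT y : ℝ) : ℂ))).im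
          = (w * h y).im - (w * b).im * radT y := by
        simp only [Complex.mul_im, Complex.sub_re, Complex.sub_im, Complex.mul_re,
          Complex.ofReal_re, Complex.ofReal_im]
        ring
      rw [him]; ring
    have ib1 : Integrable (fun y => 2 * (w * b).im * (radT y * (w * h y).im)) Aux.μT :=
      iσIm.const_mul _
    have ib2 : Integrable (fun y => ((w * h y).im) ^ 2
        - 2 * (w * b).im * (radT y * (w * h y).im)) Aux.μT := iIm2.sub ib1
    have ib3 : Integrable (fun y => ((w * b).im) ^ 2 * radT y ^ 2) Aux.μT :=
      irad2.const_mul _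
    rw [hpt, integral_add ib2 ib3,
      integral_sub iIm2 ib1, integral_const_mul, integral_const_mul,
      hIm2, hσIm, hrad2, mul_one]
  rw [hF1, hF2]
  have h1 : (w * (c - b)).im = (w * c).im - (w * b).im := by
    rw [mul_sub, Complex.sub_im]
  have h2 : Complex.normSq c = (w * c).re ^ 2 + (w * c).im ^ 2 := by
    have hmulns : Complex.normSq (w * c) = Complex.normSq c := by
      rw [Complex.normSq_mul, hw', one_mul]
    rw [← hmulns, Complex.normSq_apply]; ring
  rw [h1, h2]; ring
end
end
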